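/- Let d ≥ 2 be an integer and r_0 > 0. Let B : (r_0, ∞) → ℝ be continuously differentiable with B(r) > 0 for all r > r_0, and define Φ(r) = ∫_{r_0}^r √(B(ρ)) / (ρ · √((ρ/r_0)^(2d−2) − 1)) dρ for r > r_0. Then Φ is twice differentiable on (r_0, ∞) and for every r > r_0 it satisfies r·B(r)·Φ''(r) + (d−1)·r²·Φ'(r)³ + Φ'(r)·(d·B(r) − (r/2)·B'(r)) = 0. -/

import Mathlib

open MeasureTheory

private lemma key_alg (nn dd r Bv B'v sB sG Gp : ℝ) (hr : r ≠ 0) (hsB : sB ≠ 0) (hsG : sG ≠ 0)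
    (hB : sB ^ 2 = Bv) (hnd : nn = 2 * dd - 2)
    (hGp : r * Gp = nn * (sG ^ 2 + 1)) :
    r * Bv * ((B'v / (2 * sB) * (r * sG) - sB * (1 * sG + r * (Gp / (2 * sG)))) / (r * sG) ^ 2)
      + (dd - 1) * r ^ 2 * (sB / (r * sG)) ^ 3
      + (sB / (r * sG)) * (dd * Bv - r / 2 * B'v) = 0 := by
  subst hB hnd
  field_simp
  linear_combination (-sB ^ 3) * hGp

/-- The integral formula `Φ(r) = ∫_{r₀}^r √(B(ρ)) / (ρ √((ρ/r₀)^(2d−2) − 1)) dρ`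
solves the extremality ODE `r B Φ'' + (d−1) r² (Φ')³ + Φ'(d B − (r/2) B') = 0` on `(r₀, ∞)`. -/
theorem strip_extremal_surface_ode
    (d : ℕ) (hd : 2 ≤ d) (r₀ : ℝ) (hr₀ : 0 < r₀)
    (B B' : ℝ → ℝ)
    (hB : ∀ r ∈ Set.Ioi r₀, HasDerivAt B (B' r) r)
    (hB'cont : ContinuousOn B' (Set.Ioi r₀))
    (hBpos : ∀ r ∈ Set.Ioi r₀, 0 < B r)
    (Φ : ℝ → ℝ)
    (hΦ : ∀ r, Φ r = ∫ ρ in r₀..r,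
      Real.sqrt (B ρ) / (ρ * Real.sqrt ((ρ / r₀) ^ (2 * d - 2) - 1))) :
    ∀ r ∈ Set.Ioi r₀,
      DifferentiableAt ℝ Φ r ∧ DifferentiableAt ℝ (deriv Φ) r ∧
      r * B r * deriv (deriv Φ) r + ((d : ℝ) - 1) * r ^ 2 * (deriv Φ r) ^ 3 +
        deriv Φ r * ((d : ℝ) * B r - (r / 2) * B' r) = 0 := by
  set f : ℝ → ℝ := fun ρ => Real.sqrt (B ρ) / (ρ * Real.sqrt ((ρ / r₀) ^ (2 * d - 2) - 1))
    with hf_def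
  have hΦf : Φ = fun u => ∫ ρ in r₀..u, f ρ := funext hΦ
  -- basic positivity facts
  have hspos : ∀ s ∈ Set.Ioi r₀, 0 < s := fun s hs => hr₀.trans hs
  have hGpos : ∀ s ∈ Set.Ioi r₀, 0 < (s / r₀) ^ (2 * d - 2) - 1 := by
    intro s hs
    have h1 : 1 < s / r₀ := (one_lt_div hr₀).2 hs
    have hn0 : 2 * d - 2 ≠ 0 := by omega
    have := (one_lt_pow_iff_of_nonneg (by positivity) hn0).2 h1
    linarith
  have hsGpos : ∀ s ∈ Set.Ioi r₀, 0 < Real.sqrt ((s / r₀) ^ (2 * d - 2) - 1) :=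
    fun s hs => Real.sqrt_pos.2 (hGpos s hs)
  have hdenne : ∀ s ∈ Set.Ioi r₀, s * Real.sqrt ((s / r₀) ^ (2 * d - 2) - 1) ≠ 0 :=
    fun s hs => (mul_pos (hspos s hs) (hsGpos s hs)).ne'
  -- continuity of the integrand on (r₀, ∞)
  have hcontf : ContinuousOn f (Set.Ioi r₀) := by
    intro s hs
    apply ContinuousAt.continuousWithinAt
    have h1 : ContinuousAt (fun ρ => Real.sqrt (B ρ)) s :=
      Real.continuous_sqrt.continuousAt.comp (hB s hs).differentiableAt.continuousAt
    have h2 : ContinuousAt (fun ρ => ρ * Real.sqrt ((ρ / r₀) ^ (2 * d - 2) - 1)) s := by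
      apply continuousAt_id.mul
      exact Real.continuous_sqrt.continuousAt.comp (by fun_prop)
    exact h1.div h2 (hdenne s hs)
  intro r hr
  have hrpos : 0 < r := hspos r hr
  by_cases hint : IntervalIntegrable f volume r₀ r
  case neg =>
    -- the integral is undefined everywhere beyond r₀, so Φ vanishes on (r₀, ∞)
    have hzero : ∀ s ∈ Set.Ioi r₀, Φ s = 0 := by
      intro s hs
      rw [hΦf]
      apply intervalIntegral.integral_undef
      intro hcon
      apply hint
      rcases le_or_gt s r with hsr | hrs
      · refine hcon.trans ?_
        apply ContinuousOn.intervalIntegrable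
        apply hcontf.mono
        rw [Set.uIcc_of_le hsr]
        exact fun x hx => lt_of_lt_of_le hs hx.1
      · refine hcon.mono_set (Set.uIcc_subset_uIcc Set.left_mem_uIcc ?_)
        exact Set.mem_uIcc.2 (Or.inl ⟨le_of_lt hr, hrs.le⟩)
    have hΦ0 : ∀ s ∈ Set.Ioi r₀, HasDerivAt Φ 0 s := by
      intro s hs
      refine (hasDerivAt_const s (0 : ℝ)).congr_of_eventuallyEq ?_
      exact Filter.eventuallyEq_of_mem (isOpen_Ioi.mem_nhds hs) hzero
    have hdΦ0 : ∀ s ∈ Set.Ioi r₀, deriv Φ s = 0 := fun s hs => (hΦ0 s hs).deriv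
    have hΦ00 : HasDerivAt (deriv Φ) 0 r := by
      refine (hasDerivAt_const r (0 : ℝ)).congr_of_eventuallyEq ?_
      exact Filter.eventuallyEq_of_mem (isOpen_Ioi.mem_nhds hr) hdΦ0
    refine ⟨(hΦ0 r hr).differentiableAt, hΦ00.differentiableAt, ?_⟩
    rw [hΦ00.deriv, hdΦ0 r hr]
    ring
  case pos =>
    -- integrable for every upper endpoint
    have hintall : ∀ s ∈ Set.Ioi r₀, IntervalIntegrable f volume r₀ s := by
      intro s hs
      rcases le_or_gt s r with hsr | hrs
      · exact hint.mono_set (Set.uIcc_subset_uIcc Set.left_mem_uIcc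
          (Set.mem_uIcc.2 (Or.inl ⟨le_of_lt hs, hsr⟩)))
      · refine hint.trans ?_
        apply ContinuousOn.intervalIntegrable
        apply hcontf.mono
        rw [Set.uIcc_of_le hrs.le]
        exact fun x hx => lt_of_lt_of_le hr hx.1
    -- Φ' = f on (r₀, ∞)
    have hΦderiv : ∀ s ∈ Set.Ioi r₀, HasDerivAt Φ (f s) s := by
      intro s hs
      rw [hΦf]
      exact intervalIntegral.integral_hasDerivAt_right (hintall s hs)
        (hcontf.stronglyMeasurableAtFilter isOpen_Ioi s hs)
        ((hcontf s hs).continuousAt (isOpen_Ioi.mem_nhds hs))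
    have hdΦeq : Set.EqOn (deriv Φ) f (Set.Ioi r₀) := fun s hs => (hΦderiv s hs).deriv
    -- derivative of f at r
    set sB : ℝ := Real.sqrt (B r) with hsB_def
    set sG : ℝ := Real.sqrt ((r / r₀) ^ (2 * d - 2) - 1) with hsG_def
    set Gp : ℝ := ((2 * d - 2 : ℕ) : ℝ) * (r / r₀) ^ (2 * d - 2 - 1) * (1 / r₀) with hGp_def
    have hu : HasDerivAt (fun ρ => Real.sqrt (B ρ)) (B' r / (2 * sB)) r :=
      (hB r hr).sqrt (hBpos r hr).ne'
    have hG : HasDerivAt (fun ρ => (ρ / r₀) ^ (2 * d - 2) - 1) Gp r := by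
      have h1 : HasDerivAt (fun ρ : ℝ => ρ / r₀) (1 / r₀) r := (hasDerivAt_id r).div_const r₀
      simpa [hGp_def] using (h1.pow (2 * d - 2)).sub_const 1
    have hsGd : HasDerivAt (fun ρ => Real.sqrt ((ρ / r₀) ^ (2 * d - 2) - 1)) (Gp / (2 * sG)) r :=
      hG.sqrt (hGpos r hr).ne'
    have hv : HasDerivAt (fun ρ => ρ * Real.sqrt ((ρ / r₀) ^ (2 * d - 2) - 1))
        (1 * sG + r * (Gp / (2 * sG))) r := (hasDerivAt_id r).mul hsGd
    have hfd : HasDerivAt f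
        ((B' r / (2 * sB) * (r * sG) - sB * (1 * sG + r * (Gp / (2 * sG)))) / (r * sG) ^ 2) r :=
      hu.div hv (hdenne r hr)
    have hdf : HasDerivAt (deriv Φ)
        ((B' r / (2 * sB) * (r * sG) - sB * (1 * sG + r * (Gp / (2 * sG)))) / (r * sG) ^ 2) r :=
      hfd.congr_of_eventuallyEq
        (Filter.eventuallyEq_of_mem (isOpen_Ioi.mem_nhds hr) hdΦeq)
    refine ⟨(hΦderiv r hr).differentiableAt, hdf.differentiableAt, ?_⟩
    rw [hdf.deriv, hdΦeq hr]
    have hfr : f r = sB / (r * sG) := rfl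
    rw [hfr]
    apply key_alg ((2 * d - 2 : ℕ) : ℝ) (d : ℝ) r (B r) (B' r) sB sG Gp hrpos.ne'
      (Real.sqrt_pos.2 (hBpos r hr)).ne' (hsGpos r hr).ne'
      (Real.sq_sqrt (hBpos r hr).le)
    · push_cast [Nat.cast_sub (by omega : 2 ≤ 2 * d)]
      ring
    · have hq : (r / r₀) ^ (2 * d - 2 - 1) * (r / r₀) = (r / r₀) ^ (2 * d - 2) := by
        rw [← pow_succ]
        congr 1
        omega
      have hsG2 : sG ^ 2 = (r / r₀) ^ (2 * d - 2) - 1 := Real.sq_sqrt (hGpos r hr).le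
      rw [hGp_def, hsG2]
      have h3 : r * (((2 * d - 2 : ℕ) : ℝ) * (r / r₀) ^ (2 * d - 2 - 1) * (1 / r₀))
          = ((2 * d - 2 : ℕ) : ℝ) * ((r / r₀) ^ (2 * d - 2 - 1) * (r / r₀)) := by ring
      rw [h3, hq]
      ring
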